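/- arXiv:1211.2503 — 4 statements merged into one kernel-verified Lean document; each statement's English description precedes it below -/
import Mathlib

section
/- Let g be a finite-dimensional nilpotent Lie algebra over k whose center z(g) is contained in the derived subalgebra [g, g], and let (π, V) be a finite-dimensional representation of g. Let π_N be a representation of g on V such that for every X in g the endomorphism π_N(X) is the nilpotent part of the Jordan–Chevalley decomposition of π(X) (that is, π(X) − π_N(X) is semisimple, π_N(X) is nilpotent, and the two commute). Then π is injective if and only if π_N is injective. -/
open Module LinearMap Polynomial

/-- Vandermonde-type lemma: if positive-integer-weighted power sums of a finite set of field
elements vanish for all exponents `n ≥ 1` (char zero), then all the elements are zero. -/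
lemma aux_eq_zero_of_sum_pow_eq_zero {K : Type*} [Field K] [CharZero K] (s : Finset K)
    (d : K → ℕ) (hd : ∀ μ ∈ s, 0 < d μ)
    (h : ∀ n : ℕ, 1 ≤ n → ∑ μ ∈ s, (d μ : K) * μ ^ n = 0) :
    ∀ μ ∈ s, μ = 0 := by
  by_contra hcon
  push_neg at hcon
  obtain ⟨μ₀, hμ₀s, hμ₀⟩ := hcon
  classical
  set t : Finset K := insert 0 s with ht
  set Q : K[X] := Lagrange.interpolate t id (fun x => if x = μ₀ then 1 else 0) with hQ
  have hinj : Set.InjOn (id : K → K) t := Function.injective_id.injOn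
  have heval : ∀ μ ∈ t, Q.eval μ = if μ = μ₀ then 1 else 0 := fun μ hμ =>
    Lagrange.eval_interpolate_at_node _ hinj hμ
  have hQ0 : Q.coeff 0 = 0 := by
    rw [Polynomial.coeff_zero_eq_eval_zero, heval 0 (Finset.mem_insert_self 0 s),
      if_neg (Ne.symm hμ₀)]
  -- compute the weighted sum of Q over s in two ways
  have h1 : ∑ μ ∈ s, (d μ : K) * Q.eval μ = (d μ₀ : K) := by
    rw [Finset.sum_eq_single μ₀]
    · rw [heval μ₀ (Finset.mem_insert_of_mem hμ₀s), if_pos rfl, mul_one]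
    · intro μ hμ hne
      rw [heval μ (Finset.mem_insert_of_mem hμ), if_neg hne, mul_zero]
    · intro hc; exact absurd hμ₀s hc
  have h2 : ∑ μ ∈ s, (d μ : K) * Q.eval μ = 0 := by
    have : ∀ μ ∈ s, (d μ : K) * Q.eval μ =
        ∑ n ∈ Finset.range (Q.natDegree + 1), Q.coeff n * ((d μ : K) * μ ^ n) := by
      intro μ _
      rw [Polynomial.eval_eq_sum_range, Finset.mul_sum]
      exact Finset.sum_congr rfl fun n _ => by ring
    rw [Finset.sum_congr rfl this, Finset.sum_comm]
    refine Finset.sum_eq_zero fun n _ => ?_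
    rcases Nat.eq_zero_or_pos n with hn | hn
    · subst hn; simp [hQ0]
    · rw [← Finset.mul_sum, h n hn, mul_zero]
  rw [h1] at h2
  exact absurd h2 (by exact_mod_cast (hd μ₀ hμ₀s).ne')

/-- Over an algebraically closed field of characteristic zero, an endomorphism all of whose
power traces vanish is nilpotent. -/
lemma aux_isNilpotent_of_trace_pow_closed {K V : Type*} [Field K] [CharZero K] [IsAlgClosed K]
    [AddCommGroup V] [Module K V] [FiniteDimensional K V] (f : Module.End K V)
    (h : ∀ n : ℕ, 1 ≤ n → trace K V (f ^ n) = 0) : IsNilpotent f := by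
  classical
  set N : K → Submodule K V := fun μ => f.maxGenEigenspace μ with hN
  have hInd : iSupIndep N := f.independent_maxGenEigenspace
  have hTop : ⨆ μ, N μ = ⊤ := f.iSup_maxGenEigenspace_eq_top
  have hInt : DirectSum.IsInternal N :=
    DirectSum.isInternal_submodule_of_iSupIndep_of_iSup_eq_top hInd hTop
  have hfin : {μ | N μ ≠ ⊥}.Finite := WellFoundedGT.finite_ne_bot_of_iSupIndep hInd
  have hMapsTo : ∀ μ : K, Set.MapsTo f (N μ) (N μ) := fun μ =>
    f.mapsTo_maxGenEigenspace_of_comm (Commute.refl f) μ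
  have hMapsTo' : ∀ (n : ℕ) (μ : K), Set.MapsTo (f ^ n) (N μ) (N μ) := fun n μ =>
    f.mapsTo_maxGenEigenspace_of_comm ((Commute.refl f).pow_right n) μ
  -- trace of restriction to each maximal generalised eigenspace
  have key : ∀ n : ℕ, 1 ≤ n →
      ∑ μ ∈ hfin.toFinset, (finrank K (N μ) : K) * μ ^ n = 0 := by
    intro n hn
    have htr := LinearMap.trace_eq_sum_trace_restrict' hInt hfin (hMapsTo' n)
    rw [h n hn, eq_comm] at htr
    rw [← htr]
    refine Finset.sum_congr rfl fun μ hμ => ?_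
    -- compute the trace of the restriction
    set gm : Module.End K (N μ) := f.restrict (hMapsTo μ) with hgm
    have hres : (f ^ n).restrict (hMapsTo' n μ) = gm ^ n := by
      ext x
      rw [hgm, ← Module.End.pow_restrict n]
      exact fun x hx => hMapsTo μ hx
    set ν : Module.End K (N μ) := gm - algebraMap K _ μ with hν
    have hνnil : IsNilpotent ν := by
      have h2 := f.isNilpotent_restrict_maxGenEigenspace_sub_algebraMap μ
      have heq : ν = (f - algebraMap K (Module.End K V) μ).restrict
          (Module.End.mapsTo_maxGenEigenspace_of_comm
            (Algebra.mul_sub_algebraMap_commutes f μ) μ) := by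
        ext x
        simp [hν, hgm, LinearMap.restrict_apply, LinearMap.restrict_coe_apply, Module.algebraMap_end_apply]
        rfl
      rw [heq]
      exact h2
    have hgm_eq : gm = algebraMap K (Module.End K (N μ)) μ + ν := by
      rw [hν, add_sub_cancel]
    have hcab : Commute (algebraMap K (Module.End K (N μ)) μ) ν :=
      (Algebra.commutes μ ν : _)
    have htermval : ∀ m : ℕ,
        (algebraMap K (Module.End K (N μ)) μ) ^ m * ν ^ (n - m) *
          (n.choose m : Module.End K (N μ)) =
        ((n.choose m : K) * μ ^ m) • ν ^ (n - m) := by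
      intro m
      have hc : (n.choose m : Module.End K (N μ)) = algebraMap K _ ((n.choose m : K)) := by
        simp
      rw [hc, ← map_pow, mul_assoc, ← Algebra.commutes ((n.choose m : K)) (ν ^ (n - m)),
        ← mul_assoc, ← map_mul, ← Algebra.smul_def, mul_comm (μ ^ m)]
    rw [hres, hgm_eq, Commute.add_pow hcab n, map_sum, Finset.sum_eq_single n]
    · rw [htermval n, Nat.sub_self, pow_zero, map_smul, LinearMap.trace_one]
      simp [Nat.choose_self]
      ring
    · intro m hm hne
      rw [htermval m, map_smul]
      have hj : 1 ≤ n - m := by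
        rw [Finset.mem_range] at hm
        omega
      have hnupow : IsNilpotent (ν ^ (n - m)) := by
        obtain ⟨r, hr⟩ := hνnil
        exact ⟨r, by
          rw [← pow_mul]
          exact pow_eq_zero_of_le (Nat.le_mul_of_pos_left r hj) hr⟩
      rw [IsReduced.eq_zero _ (LinearMap.isNilpotent_trace_of_isNilpotent hnupow), smul_zero]
    · intro hc
      exact absurd (Finset.self_mem_range_succ n) hc
  have hz : ∀ μ ∈ hfin.toFinset, μ = 0 := by
    refine aux_eq_zero_of_sum_pow_eq_zero _ _ (fun μ hμ => ?_) key
    have : N μ ≠ ⊥ := by simpa using hμ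
    exact finrank_pos_iff.mpr (Submodule.nontrivial_iff_ne_bot.mpr this)
  have hN0 : N 0 = ⊤ := by
    rw [← top_le_iff, ← hTop]
    refine iSup_le fun μ => ?_
    rcases eq_or_ne (N μ) ⊥ with hb | hb
    · rw [hb]; exact bot_le
    · have : μ = 0 := hz μ (by simpa using hb)
      rw [this]
  have := (LinearMap.charpoly_nilpotent_tfae f).out 2 0
  rw [← this]
  intro m
  have hm : m ∈ N 0 := hN0 ▸ Submodule.mem_top
  rw [hN, Module.End.mem_maxGenEigenspace] at hm
  obtain ⟨n, hn⟩ := hm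
  exact ⟨n, by simpa using hn⟩

/-- Over any field of characteristic zero, an endomorphism all of whose power traces vanish is
nilpotent. -/
lemma aux_isNilpotent_of_trace_pow {k V : Type*} [Field k] [CharZero k]
    [AddCommGroup V] [Module k V] [FiniteDimensional k V] (f : Module.End k V)
    (h : ∀ n : ℕ, 1 ≤ n → trace k V (f ^ n) = 0) : IsNilpotent f := by
  classical
  let K := AlgebraicClosure k
  have : CharZero K := charZero_of_injective_algebraMap (algebraMap k K).injective
  let b := Module.finBasis k V
  let e := LinearMap.toMatrixAlgEquiv b
  set M : Matrix _ _ k := e f with hM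
  have htrM : ∀ n : ℕ, 1 ≤ n → Matrix.trace (M ^ n) = 0 := by
    intro n hn
    have : M ^ n = LinearMap.toMatrix b b (f ^ n) := by
      rw [hM, ← map_pow]; rfl
    rw [this, ← LinearMap.trace_eq_matrix_trace k b, h n hn]
  set M' : Matrix _ _ K := M.map (algebraMap k K) with hM'
  have hpowM' : ∀ n : ℕ, M' ^ n = (M ^ n).map (algebraMap k K) := by
    intro n
    rw [hM']
    exact (map_pow ((algebraMap k K).mapMatrix) M n).symm
  have htrM' : ∀ n : ℕ, 1 ≤ n → Matrix.trace (M' ^ n) = 0 := by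
    intro n hn
    rw [hpowM']
    have : Matrix.trace ((M ^ n).map (algebraMap k K)) = algebraMap k K (Matrix.trace (M ^ n)) := by
      simp [Matrix.trace, Matrix.diag, map_sum]
    rw [this, htrM n hn, map_zero]
  -- pass to the endomorphism over K
  let e' := Matrix.toLinAlgEquiv' (R := K) (n := Fin (finrank k V))
  have hnil' : IsNilpotent (e' M') := by
    apply aux_isNilpotent_of_trace_pow_closed
    intro n hn
    rw [← map_pow, LinearMap.trace_eq_matrix_trace K (Pi.basisFun K (Fin (finrank k V))),
      LinearMap.toMatrix_eq_toMatrix']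
    have : LinearMap.toMatrix' (e' (M' ^ n)) = M' ^ n :=
      LinearMap.toMatrixAlgEquiv'_toLinAlgEquiv' (M' ^ n)
    rw [this, htrM' n hn]
  have hnilM' : IsNilpotent M' := by
    obtain ⟨n, hn⟩ := hnil'
    exact ⟨n, by
      have : e' (M' ^ n) = 0 := by rw [map_pow, hn]
      simpa using congrArg e'.symm this⟩
  have hnilM : IsNilpotent M := by
    obtain ⟨n, hn⟩ := hnilM'
    refine ⟨n, ?_⟩
    rw [hpowM'] at hn
    ext i j
    have := congrFun (congrFun (congrArg (fun A => A) hn) i) j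
    have h0 : algebraMap k K ((M ^ n) i j) = 0 := by
      simpa [Matrix.map] using congrFun (congrFun hn i) j
    exact (algebraMap k K).injective (by simpa using h0)
  obtain ⟨n, hn⟩ := hnilM
  exact ⟨n, by
    have : e (f ^ n) = 0 := by rw [map_pow, ← hM, hn]
    simpa using congrArg e.symm this⟩

/-- A nontrivial ideal of a nilpotent Lie algebra contains a nonzero central element. -/
lemma aux_exists_center {k g : Type*} [Field k] [LieRing g] [LieAlgebra k g]
    [LieRing.IsNilpotent g] (I : LieIdeal k g) (h : I ≠ ⊥) :
    ∃ z : g, z ≠ 0 ∧ z ∈ I ∧ z ∈ LieAlgebra.center k g := by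
  have hnt : Nontrivial I := by
    rw [LieSubmodule.nontrivial_iff_ne_bot]; exact h
  have hnilp : LieModule.IsNilpotent g I := by
    rw [LieSubmodule.isNilpotent_iff_exists_self_le_ucs]
    obtain ⟨n, hn⟩ := (LieModule.isNilpotent_iff_exists_ucs_eq_top k).mp
      (inferInstance : LieModule.IsNilpotent g g)
    exact ⟨n, hn ▸ le_top⟩
  have := LieModule.nontrivial_max_triv_of_isNilpotent k g I
  obtain ⟨z, hz⟩ := exists_ne (0 : LieModule.maxTrivSubmodule k g I)
  refine ⟨((z : I) : g), ?_, (z : I).2, ?_⟩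
  · intro hc
    apply hz
    ext
    exact hc
  · rw [LieAlgebra.center, LieModule.mem_maxTrivSubmodule]
    intro x
    have hx : ⁅x, (z : I)⁆ = 0 := z.2 x
    have := congrArg (fun (w : I) => (w : g)) hx
    simpa using this

attribute [local instance] LieRing.ofAssociativeRing

/-- If `g` is a finite-dimensional nilpotent Lie algebra with `z(g) ⊆ [g, g]`, `(π, V)` is a
finite-dimensional representation of `g`, and `πN` is a representation of `g` on `V` such that
each `πN X` is the nilpotent part of the Jordan–Chevalley decomposition of `π X`, then `π` is
injective iff `πN` is injective. -/
theorem faithful_iff_nilpotent_part_faithful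
    (k g V : Type*) [Field k] [CharZero k]
    [LieRing g] [LieAlgebra k g] [FiniteDimensional k g] [LieRing.IsNilpotent g]
    [AddCommGroup V] [Module k V] [FiniteDimensional k V]
    (hz : LieAlgebra.center k g ≤ ⁅(⊤ : LieIdeal k g), (⊤ : LieIdeal k g)⁆)
    (π πN : g →ₗ⁅k⁆ Module.End k V)
    (hdecomp : ∀ X : g, (π X - πN X).IsSemisimple ∧ IsNilpotent (πN X) ∧
      Commute (π X - πN X) (πN X)) :
    Function.Injective π ↔ Function.Injective πN := by
  have inj_iff : ∀ f : g →ₗ⁅k⁆ Module.End k V,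
      Function.Injective f ↔ ∀ x, f x = 0 → x = 0 := by
    intro f
    constructor
    · intro hf x hx
      exact hf (hx.trans f.map_zero.symm)
    · intro hf a b hab
      have : f (a - b) = 0 := by rw [map_sub f, hab, sub_self]
      exact sub_eq_zero.mp (hf _ this)
  -- trace vanishing on brackets against commuting operators
  have hbr : ∀ A : Module.End k V, (∀ x : g, Commute A (π x)) → ∀ W : g,
      W ∈ ⁅(⊤ : LieIdeal k g), (⊤ : LieIdeal k g)⁆ →
      LinearMap.trace k V (A * π W) = 0 := by
    intro A hA W hW
    have hW' : W ∈ Submodule.span k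
        { m : g | ∃ x ∈ (⊤ : LieIdeal k g), ∃ n ∈ (⊤ : LieIdeal k g), ⁅x, n⁆ = m } := by
      rw [← LieSubmodule.lieIdeal_oper_eq_linear_span']
      exact hW
    clear hW
    induction hW' using Submodule.span_induction with
    | mem w hw =>
      obtain ⟨x, -, y, -, rfl⟩ := hw
      have : π ⁅x, y⁆ = π x * π y - π y * π x := by
        rw [LieHom.map_lie, Ring.lie_def]
      rw [this, mul_sub, map_sub]
      have h1 : A * (π x * π y) = (A * π x) * π y := (mul_assoc _ _ _).symm
      have h2 : A * (π y * π x) = (A * π y) * π x := (mul_assoc _ _ _).symm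
      rw [h1, h2, LinearMap.trace_mul_comm]
      rw [show π y * (A * π x) = (A * π y) * π x by
        rw [← mul_assoc, (hA y).eq]]
      exact sub_self _
    | zero => simp [π.map_zero]
    | add w₁ w₂ _ _ h1 h2 => rw [map_add π, mul_add, map_add, h1, h2, add_zero]
    | smul c w _ h1 => rw [map_smul π, mul_smul_comm, map_smul, h1, smul_zero]
  -- central elements of the derived algebra act nilpotently via π
  have hZnil : ∀ Z : g, Z ∈ LieAlgebra.center k g → IsNilpotent (π Z) := by
    intro Z hc
    have hd : Z ∈ ⁅(⊤ : LieIdeal k g), (⊤ : LieIdeal k g)⁆ := hz hc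
    apply aux_isNilpotent_of_trace_pow
    intro n hn
    have hcomm : ∀ x : g, Commute (π Z) (π x) := by
      intro x
      have hZx : ⁅Z, x⁆ = (0 : g) := by
        have h := (LieModule.mem_maxTrivSubmodule k g g Z).mp hc x
        rw [← lie_skew, h, neg_zero]
      have h0 : ⁅π Z, π x⁆ = 0 := by rw [← π.map_lie, hZx, map_zero π]
      rw [Ring.lie_def, sub_eq_zero] at h0
      exact h0
    have := hbr ((π Z) ^ (n - 1)) (fun x => (hcomm x).pow_left (n - 1)) Z hd
    rwa [← pow_succ, Nat.sub_add_cancel hn] at this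
  constructor
  · intro hπ
    rw [inj_iff]
    intro X hX
    by_contra hX0
    have hker : πN.ker ≠ ⊥ := by
      intro hbot
      apply hX0
      have : X ∈ πN.ker := by rw [LieHom.mem_ker]; exact hX
      rw [hbot] at this
      simpa using this
    obtain ⟨Z, hZne, hZI, hZc⟩ := aux_exists_center πN.ker hker
    have h1 : πN Z = 0 := LieHom.mem_ker.mp hZI
    have h2 : IsNilpotent (π Z) := hZnil Z hZc
    have h3 : (π Z).IsSemisimple := by
      have := (hdecomp Z).1
      rwa [h1, sub_zero] at this
    exact hZne ((inj_iff π).mp hπ Z (Module.End.eq_zero_of_isNilpotent_isSemisimple h2 h3))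
  · intro hπN
    rw [inj_iff]
    intro X hX
    obtain ⟨hs, hnl, -⟩ := hdecomp X
    rw [hX, zero_sub] at hs
    have h0 : -(πN X) = 0 :=
      Module.End.eq_zero_of_isNilpotent_isSemisimple hnl.neg hs
    exact (inj_iff πN).mp hπN X (neg_eq_zero.mp h0)
end

section
/- Let n ∈ ℕ and let g be a Lie subalgebra of n_n(k) that is isomorphic (as a Lie algebra over k) to L_{5,9}. Then n ≥ 5. -/
attribute [local instance 100] LieRing.ofAssociativeRing

namespace L59Aux

/-- `X` vanishes below the `d`-th superdiagonal. -/
def Strict {k : Type*} [Field k] {n : ℕ} (d : ℕ) (X : Matrix (Fin n) (Fin n) k) : Prop :=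
  ∀ i j : Fin n, (j : ℕ) < (i : ℕ) + d → X i j = 0

theorem Strict.mul {k : Type*} [Field k] {n : ℕ} {a b : ℕ}
    {X Y : Matrix (Fin n) (Fin n) k} (hX : Strict a X) (hY : Strict b Y) :
    Strict (a + b) (X * Y) := by
  intro i j hij
  rw [Matrix.mul_apply]
  apply Finset.sum_eq_zero
  intro l _
  by_cases h : (l : ℕ) < (i : ℕ) + a
  · rw [hX i l h, zero_mul]
  · push_neg at h
    rw [hY l j (by omega), mul_zero]

theorem Strict.lie {k : Type*} [Field k] {n : ℕ} {a b : ℕ}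
    {X Y : Matrix (Fin n) (Fin n) k} (hX : Strict a X) (hY : Strict b Y) :
    Strict (a + b) ⁅X, Y⁆ := by
  intro i j hij
  rw [Ring.lie_def, Matrix.sub_apply, hX.mul hY i j hij, (hY.mul hX) i j (by omega), sub_zero]

end L59Aux



/-- The Lie algebra `n_n(k)` of strictly upper triangular `n × n` matrices over `k`. -/
def strictUpper (k : Type*) [Field k] (n : ℕ) :
    LieSubalgebra k (Matrix (Fin n) (Fin n) k) where
  carrier := {A | ∀ i j : Fin n, j ≤ i → A i j = 0}
  add_mem' := by
    intro A B hA hB i j hij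
    simp [Matrix.add_apply, hA i j hij, hB i j hij]
  zero_mem' := by intro i j hij; simp
  smul_mem' := by
    intro c A hA i j hij
    simp [Matrix.smul_apply, hA i j hij]
  lie_mem' := by
    intro A B hA hB i j hij
    have key : ∀ (X Y : Matrix (Fin n) (Fin n) k),
        (∀ i j : Fin n, j ≤ i → X i j = 0) → (∀ i j : Fin n, j ≤ i → Y i j = 0) →
        (X * Y) i j = 0 := by
      intro X Y hX hY
      rw [Matrix.mul_apply]
      apply Finset.sum_eq_zero
      intro l _
      by_cases h : l ≤ i
      · rw [hX i l h, zero_mul]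
      · push_neg at h
        rw [hY l j (hij.trans h.le), mul_zero]
    have hbr : ⁅A, B⁆ = A * B - B * A := Ring.lie_def A B
    rw [hbr, Matrix.sub_apply, key A B hA hB, key B A hB hA, sub_zero]

/-- A basis of a Lie algebra realizing the bracket table of `L_{5,9}`:
`[X1,X2] = X3`, `[X1,X3] = Z1`, `[X2,X3] = Z2`, all other brackets of basis vectors zero.
Here `X1, X2, X3, Z1, Z2` are `b 0, b 1, b 2, b 3, b 4`. -/
def IsL59Basis {k L : Type*} [Field k] [LieRing L] [LieAlgebra k L]
    (b : Module.Basis (Fin 5) k L) : Prop :=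
  ⁅b 0, b 1⁆ = b 2 ∧ ⁅b 0, b 2⁆ = b 3 ∧ ⁅b 1, b 2⁆ = b 4 ∧
  ⁅b 0, b 3⁆ = 0 ∧ ⁅b 0, b 4⁆ = 0 ∧ ⁅b 1, b 3⁆ = 0 ∧ ⁅b 1, b 4⁆ = 0 ∧
  ⁅b 2, b 3⁆ = 0 ∧ ⁅b 2, b 4⁆ = 0 ∧ ⁅b 3, b 4⁆ = 0

/-- If a Lie subalgebra of the strictly upper triangular matrices `n_n(k)` is isomorphic to
`L_{5,9}` (i.e. admits a basis with the `L_{5,9}` bracket table), then `n ≥ 5`. -/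
theorem five_le_of_L59_subalgebra_strictUpper
    (k : Type*) [Field k] [CharZero k] (n : ℕ)
    (g : LieSubalgebra k (Matrix (Fin n) (Fin n) k)) (hg : g ≤ strictUpper k n)
    (b : Module.Basis (Fin 5) k g) (hb : IsL59Basis b) :
    5 ≤ n := by
  by_contra hlt
  push_neg at hlt
  obtain ⟨h12, h13, h23, -⟩ := hb
  -- matrices
  set A : Fin 5 → Matrix (Fin n) (Fin n) k := fun i => (b i : Matrix (Fin n) (Fin n) k) with hA
  have hs : ∀ i : Fin 5, L59Aux.Strict 1 (A i) := by
    intro i p q hpq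
    exact hg (b i).2 p q (by omega)
  have hZ1 : L59Aux.Strict 3 (A 3) := by
    have h3 : A 3 = ⁅A 0, ⁅A 0, A 1⁆⁆ := by
      simp only [hA, ← LieSubalgebra.coe_bracket, h12, h13]
    rw [h3]
    exact (hs 0).lie ((hs 0).lie (hs 1))
  have hZ2 : L59Aux.Strict 3 (A 4) := by
    have h4 : A 4 = ⁅A 1, ⁅A 0, A 1⁆⁆ := by
      simp only [hA, ← LieSubalgebra.coe_bracket, h12, h23]
    rw [h4]
    exact (hs 1).lie ((hs 0).lie (hs 1))
  -- case n ≤ 3 : b 3 = 0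
  rcases lt_or_ge n 4 with hn | hn
  · have hz : A 3 = 0 := by
      ext i j
      exact hZ1 i j (by have := j.isLt; omega)
    exact b.ne_zero 3 (Subtype.ext hz)
  · -- n = 4
    have hn4 : n = 4 := by omega
    subst hn4
    set a : k := A 3 0 3 with ha
    set c : k := A 4 0 3 with hc
    have key : ∀ i j : Fin 4, ¬ ((j : ℕ) < (i : ℕ) + 3) → i = 0 ∧ j = 3 := by
      intro i j hij
      have hi := i.isLt; have hj := j.isLt
      constructor <;> · apply Fin.ext; omega
    rcases eq_or_ne c 0 with hc0 | hc0
    · have hz : A 4 = 0 := by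
        ext i j
        by_cases hij : (j : ℕ) < (i : ℕ) + 3
        · exact hZ2 i j hij
        · obtain ⟨hi, hj⟩ := key i j hij
          subst hi; subst hj
          simpa [← hc] using hc0
      exact b.ne_zero 4 (Subtype.ext hz)
    · have hdep : c • b 3 = a • b 4 := by
        apply Subtype.ext
        show c • A 3 = a • A 4
        ext i j
        by_cases hij : (j : ℕ) < (i : ℕ) + 3
        · simp [Matrix.smul_apply, hZ1 i j hij, hZ2 i j hij]
        · obtain ⟨hi, hj⟩ := key i j hij
          subst hi; subst hj
          simp [Matrix.smul_apply, ← ha, ← hc, mul_comm]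
      have hli := Fintype.linearIndependent_iff.mp b.linearIndependent ![0, 0, 0, c, -a]
      have hsum : ∑ i, (![0, 0, 0, c, -a] : Fin 5 → k) i • b i = 0 := by
        simp [Fin.sum_univ_five, hdep, neg_smul]
      exact hc0 (by simpa using hli hsum 3)
end

section
/- Let ε ∈ k. The linear map π_1 from L_{6,19}(ε) to gl(5,k) sending x1·X1 + x2·X2 + x3·X3 + x4·X4 + x5·X5 + z1·Z1 to the strictly upper triangular 5×5 matrix whose nonzero entries are: (1,2)-entry x1, (1,3)-entry x4, (1,4)-entry x5, (1,5)-entry z1, (2,3)-entry x2, (2,4)-entry x3, (3,5)-entry −x2, (4,5)-entry −ε·x3, is an injective Lie algebra homomorphism whose image consists of nilpotent matrices. In particular μ_nil(L_{6,19}(ε)) ≤ 5. -/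
attribute [local instance 100] LieRing.ofAssociativeRing

/-- `mu k g` is the minimal dimension of a faithful representation of `g`, i.e. the least `n`
for which there is an injective Lie algebra homomorphism `g → gl(n, k)`. -/
noncomputable def mu (k : Type*) [Field k] (g : Type*) [LieRing g] [LieAlgebra k g] : ℕ :=
  sInf {n : ℕ | ∃ π : g →ₗ⁅k⁆ Matrix (Fin n) (Fin n) k, Function.Injective π}

/-- `muNil k g` is the minimal dimension of a faithful nilrepresentation of `g`, i.e. the least
`n` for which there is an injective Lie algebra homomorphism `π : g → gl(n, k)` with every
`π X` nilpotent. -/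
noncomputable def muNil (k : Type*) [Field k] (g : Type*) [LieRing g] [LieAlgebra k g] : ℕ :=
  sInf {n : ℕ | ∃ π : g →ₗ⁅k⁆ Matrix (Fin n) (Fin n) k,
    Function.Injective π ∧ ∀ X : g, IsNilpotent (π X)}

/-- A basis of a Lie algebra realizing the bracket table of `L_{6,19}(ε)`:
`[X1,X2] = X4`, `[X1,X3] = X5`, `[X2,X4] = Z1`, `[X3,X5] = ε • Z1`, all other brackets of
basis vectors zero.  Here `X1, ..., X5, Z1` are `b 0, ..., b 4, b 5`. -/
def IsL619Basis {k L : Type*} [Field k] [LieRing L] [LieAlgebra k L] (ε : k)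
    (b : Module.Basis (Fin 6) k L) : Prop :=
  ⁅b 0, b 1⁆ = b 3 ∧ ⁅b 0, b 2⁆ = b 4 ∧ ⁅b 1, b 3⁆ = b 5 ∧ ⁅b 2, b 4⁆ = ε • b 5 ∧
  ⁅b 0, b 3⁆ = 0 ∧ ⁅b 0, b 4⁆ = 0 ∧ ⁅b 0, b 5⁆ = 0 ∧
  ⁅b 1, b 2⁆ = 0 ∧ ⁅b 1, b 4⁆ = 0 ∧ ⁅b 1, b 5⁆ = 0 ∧
  ⁅b 2, b 3⁆ = 0 ∧ ⁅b 2, b 5⁆ = 0 ∧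
  ⁅b 3, b 4⁆ = 0 ∧ ⁅b 3, b 5⁆ = 0 ∧ ⁅b 4, b 5⁆ = 0

namespace L619aux

variable {k : Type*} [Field k]

/-- The generic matrix of the representation. -/
def A (ε x1 x2 x3 x4 x5 z1 : k) : Matrix (Fin 5) (Fin 5) k :=
  !![0, x1, x4, x5, z1;
     0, 0, x2, x3, 0;
     0, 0, 0, 0, -x2;
     0, 0, 0, 0, -(ε * x3);
     0, 0, 0, 0, 0]

lemma A_add (ε a1 a2 a3 a4 a5 a6 c1 c2 c3 c4 c5 c6 : k) :
    A ε a1 a2 a3 a4 a5 a6 + A ε c1 c2 c3 c4 c5 c6 =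
      A ε (a1 + c1) (a2 + c2) (a3 + c3) (a4 + c4) (a5 + c5) (a6 + c6) := by
  ext i j
  fin_cases i <;> fin_cases j <;> simp [A, Matrix.vecHead, Matrix.vecTail] <;> ring

lemma A_smul (ε r a1 a2 a3 a4 a5 a6 : k) :
    r • A ε a1 a2 a3 a4 a5 a6 = A ε (r * a1) (r * a2) (r * a3) (r * a4) (r * a5) (r * a6) := by
  ext i j
  fin_cases i <;> fin_cases j <;> simp [A, Matrix.vecHead, Matrix.vecTail] <;> ring

lemma A_neg (ε a1 a2 a3 a4 a5 a6 : k) :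
    -A ε a1 a2 a3 a4 a5 a6 = A ε (-a1) (-a2) (-a3) (-a4) (-a5) (-a6) := by
  ext i j
  fin_cases i <;> fin_cases j <;> simp [A, Matrix.vecHead, Matrix.vecTail] <;> ring

lemma A_zero (ε : k) : A ε 0 0 0 0 0 0 = 0 := by
  ext i j
  fin_cases i <;> fin_cases j <;> simp [A, Matrix.vecHead, Matrix.vecTail]

lemma A_mul (ε a1 a2 a3 a4 a5 a6 c1 c2 c3 c4 c5 c6 : k) :
    A ε a1 a2 a3 a4 a5 a6 * A ε c1 c2 c3 c4 c5 c6 =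
      !![0, 0, a1 * c2, a1 * c3, -(a4 * c2) - ε * (a5 * c3);
         0, 0, 0, 0, -(a2 * c2) - ε * (a3 * c3);
         0, 0, 0, 0, 0;
         0, 0, 0, 0, 0;
         0, 0, 0, 0, 0] := by
  ext i j
  fin_cases i <;> fin_cases j <;>
    simp [A, Matrix.mul_apply, Fin.sum_univ_five, Matrix.vecHead, Matrix.vecTail] <;> ring

lemma A_lie (ε a1 a2 a3 a4 a5 a6 c1 c2 c3 c4 c5 c6 : k) :
    ⁅A ε a1 a2 a3 a4 a5 a6, A ε c1 c2 c3 c4 c5 c6⁆ =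
      A ε 0 0 0 (a1 * c2 - c1 * a2) (a1 * c3 - c1 * a3)
        ((a2 * c4 - a4 * c2) + ε * (a3 * c5 - a5 * c3)) := by
  rw [Ring.lie_def, A_mul, A_mul]
  ext i j
  fin_cases i <;> fin_cases j <;> simp [A, Matrix.vecHead, Matrix.vecTail] <;> ring

lemma A_pow4 (ε a1 a2 a3 a4 a5 a6 : k) : A ε a1 a2 a3 a4 a5 a6 ^ 4 = 0 := by
  rw [pow_succ, pow_succ, pow_succ, pow_one, mul_assoc, A_mul]
  ext i j
  fin_cases i <;> fin_cases j <;>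
    simp [Matrix.mul_apply, Fin.sum_univ_five, Matrix.vecHead, Matrix.vecTail]

/-- The matrices of the images of the six basis vectors. -/
def Mv (ε : k) : Fin 6 → Matrix (Fin 5) (Fin 5) k :=
  ![A ε 1 0 0 0 0 0, A ε 0 1 0 0 0 0, A ε 0 0 1 0 0 0,
    A ε 0 0 0 1 0 0, A ε 0 0 0 0 1 0, A ε 0 0 0 0 0 1]

lemma Mv0 (ε : k) : Mv ε 0 = A ε 1 0 0 0 0 0 := rfl
lemma Mv1 (ε : k) : Mv ε 1 = A ε 0 1 0 0 0 0 := rfl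
lemma Mv2 (ε : k) : Mv ε 2 = A ε 0 0 1 0 0 0 := rfl
lemma Mv3 (ε : k) : Mv ε 3 = A ε 0 0 0 1 0 0 := rfl
lemma Mv4 (ε : k) : Mv ε 4 = A ε 0 0 0 0 1 0 := rfl
lemma Mv5 (ε : k) : Mv ε 5 = A ε 0 0 0 0 0 1 := rfl

end L619aux

open L619aux in
/-- The explicit linear map `π₁ : L_{6,19}(ε) → gl(5, k)` of the paper is an injective Lie
algebra homomorphism with nilpotent image; in particular `μ_nil(L_{6,19}(ε)) ≤ 5`. -/
theorem L619_faithful_nilrep_dim_five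
    (k g : Type*) [Field k] [CharZero k] [LieRing g] [LieAlgebra k g]
    (ε : k) (b : Module.Basis (Fin 6) k g) (hb : IsL619Basis ε b) :
    (∃ π : g →ₗ⁅k⁆ Matrix (Fin 5) (Fin 5) k,
      (∀ x1 x2 x3 x4 x5 z1 : k,
        π (x1 • b 0 + x2 • b 1 + x3 • b 2 + x4 • b 3 + x5 • b 4 + z1 • b 5) =
          !![0, x1, x4, x5, z1;
             0, 0, x2, x3, 0;
             0, 0, 0, 0, -x2;
             0, 0, 0, 0, -(ε * x3);
             0, 0, 0, 0, 0]) ∧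
      Function.Injective π ∧ ∀ X : g, IsNilpotent (π X)) ∧
    muNil k g ≤ 5 := by
  obtain ⟨h1, h2, h3, h4, h5, h6, h7, h8, h9, h10, h11, h12, h13, h14, h15⟩ := hb
  have h1' : ⁅b 1, b 0⁆ = -b 3 := by rw [← lie_skew, h1]
  have h2' : ⁅b 2, b 0⁆ = -b 4 := by rw [← lie_skew, h2]
  have h3' : ⁅b 3, b 1⁆ = -b 5 := by rw [← lie_skew, h3]
  have h4' : ⁅b 4, b 2⁆ = -(ε • b 5) := by rw [← lie_skew, h4]
  have h5' : ⁅b 3, b 0⁆ = 0 := by rw [← lie_skew, h5, neg_zero]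
  have h6' : ⁅b 4, b 0⁆ = 0 := by rw [← lie_skew, h6, neg_zero]
  have h7' : ⁅b 5, b 0⁆ = 0 := by rw [← lie_skew, h7, neg_zero]
  have h8' : ⁅b 2, b 1⁆ = 0 := by rw [← lie_skew, h8, neg_zero]
  have h9' : ⁅b 4, b 1⁆ = 0 := by rw [← lie_skew, h9, neg_zero]
  have h10' : ⁅b 5, b 1⁆ = 0 := by rw [← lie_skew, h10, neg_zero]
  have h11' : ⁅b 3, b 2⁆ = 0 := by rw [← lie_skew, h11, neg_zero]
  have h12' : ⁅b 5, b 2⁆ = 0 := by rw [← lie_skew, h12, neg_zero]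
  have h13' : ⁅b 4, b 3⁆ = 0 := by rw [← lie_skew, h13, neg_zero]
  have h14' : ⁅b 5, b 3⁆ = 0 := by rw [← lie_skew, h14, neg_zero]
  have h15' : ⁅b 5, b 4⁆ = 0 := by rw [← lie_skew, h15, neg_zero]
  let f0 : g →ₗ[k] Matrix (Fin 5) (Fin 5) k := b.constr k (Mv ε)
  have fb : ∀ i : Fin 6, f0 (b i) = Mv ε i := fun i => b.constr_basis k (Mv ε) i
  have hbasis : ∀ i j : Fin 6, f0 ⁅b i, b j⁆ = ⁅f0 (b i), f0 (b j)⁆ := by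
    intro i j
    fin_cases i <;> fin_cases j <;>
      simp [h1, h2, h3, h4, h5, h6, h7, h8, h9, h10, h11, h12, h13, h14, h15,
        h1', h2', h3', h4', h5', h6', h7', h8', h9', h10', h11', h12', h13', h14', h15',
        lie_self, fb, Mv0, Mv1, Mv2, Mv3, Mv4, Mv5, A_lie, A_neg, A_smul, A_zero]
  have key : ∀ x y : g, f0 ⁅x, y⁆ = ⁅f0 x, f0 y⁆ := by
    let B1 : g →ₗ[k] g →ₗ[k] Matrix (Fin 5) (Fin 5) k :=
      LinearMap.mk₂ k (fun x y => f0 ⁅x, y⁆)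
        (fun m n p => by simp only [add_lie, map_add])
        (fun c m n => by simp only [smul_lie, map_smul])
        (fun m n p => by simp only [lie_add, map_add])
        (fun c m n => by simp only [lie_smul, map_smul])
    let B2 : g →ₗ[k] g →ₗ[k] Matrix (Fin 5) (Fin 5) k :=
      LinearMap.mk₂ k (fun x y => ⁅f0 x, f0 y⁆)
        (fun m n p => by simp only [map_add, add_lie])
        (fun c m n => by simp only [map_smul, smul_lie])
        (fun m n p => by simp only [map_add, lie_add])
        (fun c m n => by simp only [map_smul]; exact lie_smul c (f0 m) (f0 n))
    have hB : B1 = B2 := LinearMap.ext_basis b b hbasis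
    intro x y
    exact DFunLike.congr_fun (DFunLike.congr_fun hB x) y
  let π : g →ₗ⁅k⁆ Matrix (Fin 5) (Fin 5) k :=
    { toLinearMap := f0, map_lie' := fun {x y} => key x y }
  have hπ : ∀ x : g, π x = f0 x := fun _ => rfl
  have hform : ∀ x1 x2 x3 x4 x5 z1 : k,
      π (x1 • b 0 + x2 • b 1 + x3 • b 2 + x4 • b 3 + x5 • b 4 + z1 • b 5) =
        A ε x1 x2 x3 x4 x5 z1 := by
    intro x1 x2 x3 x4 x5 z1
    rw [hπ]
    simp only [map_add, map_smul, fb]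
    simp [Mv0, Mv1, Mv2, Mv3, Mv4, Mv5, A_smul, A_add]
  have hform' : ∀ x1 x2 x3 x4 x5 z1 : k,
      π (x1 • b 0 + x2 • b 1 + x3 • b 2 + x4 • b 3 + x5 • b 4 + z1 • b 5) =
        !![0, x1, x4, x5, z1;
           0, 0, x2, x3, 0;
           0, 0, 0, 0, -x2;
           0, 0, 0, 0, -(ε * x3);
           0, 0, 0, 0, 0] := fun x1 x2 x3 x4 x5 z1 => hform x1 x2 x3 x4 x5 z1
  have hrepr : ∀ x : g, x = b.repr x 0 • b 0 + b.repr x 1 • b 1 + b.repr x 2 • b 2 +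
      b.repr x 3 • b 3 + b.repr x 4 • b 4 + b.repr x 5 • b 5 := by
    intro x
    have := b.sum_repr x
    rw [Fin.sum_univ_six] at this
    exact this.symm
  have hker : ∀ x : g, π x = 0 → x = 0 := by
    intro x hx
    rw [hrepr x, hform] at hx
    have e1 := congrFun (congrFun hx 0) 1
    have e2 := congrFun (congrFun hx 1) 2
    have e3 := congrFun (congrFun hx 1) 3
    have e4 := congrFun (congrFun hx 0) 2
    have e5 := congrFun (congrFun hx 0) 3
    have e6 := congrFun (congrFun hx 0) 4
    simp [A, Matrix.vecHead, Matrix.vecTail] at e1 e2 e3 e4 e5 e6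
    rw [hrepr x, e1, e2, e3, e4, e5, e6]
    simp
  have hinj : Function.Injective π := by
    intro x y hxy
    refine sub_eq_zero.mp (hker (x - y) ?_)
    simp only [hπ] at hxy ⊢
    rw [map_sub, hxy, sub_self]
  have hnil : ∀ X : g, IsNilpotent (π X) := by
    intro X
    refine ⟨4, ?_⟩
    have hX : π X = A ε (b.repr X 0) (b.repr X 1) (b.repr X 2)
        (b.repr X 3) (b.repr X 4) (b.repr X 5) := by
      conv_lhs => rw [hrepr X]
      exact hform _ _ _ _ _ _
    rw [hX, A_pow4]
  refine ⟨⟨π, hform', hinj, hnil⟩, ?_⟩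
  exact Nat.sInf_le ⟨π, hinj, hnil⟩
end

section
/- Let g be a 6-dimensional nilpotent Lie algebra over k admitting an injective Lie algebra homomorphism π : g → gl(4,k) such that π(X) is nilpotent for every X ∈ g. Then g is isomorphic as a Lie algebra to n_4(k), the Lie algebra of strictly upper triangular 4×4 matrices over k. -/
open Module Submodule

section auxlemmas
variable {K V : Type*} [Field K] [AddCommGroup V] [Module K V] [FiniteDimensional K V]
variable {C : ℕ → Submodule K V} {S : Set (Module.End K V)} {t : ℕ}

lemma rank_sup_span_singleton {U : Submodule K V} {b : V} (hb : b ∉ U) :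
    finrank K ↥(U ⊔ K ∙ b) = finrank K U + 1 := by
  have hbne : b ≠ 0 := fun h => hb (h ▸ U.zero_mem)
  have hinf : U ⊓ (K ∙ b) = ⊥ := by
    rw [eq_bot_iff]
    intro x hx
    rw [Submodule.mem_inf, Submodule.mem_span_singleton] at hx
    obtain ⟨hxU, ⟨c, rfl⟩⟩ := hx
    rcases eq_or_ne c 0 with rfl | hc
    · simp
    · exact absurd ((U.smul_mem_iff hc).mp hxU) hb
  have := Submodule.finrank_sup_add_finrank_inf_eq U (K ∙ b)
  rw [hinf, finrank_span_singleton hbne] at this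
  simpa using this

lemma exists_between_finrank {A B : Submodule K V} (hAB : A ≤ B) {d : ℕ}
    (h1 : finrank K A ≤ d) (h2 : d ≤ finrank K B) :
    ∃ U, A ≤ U ∧ U ≤ B ∧ finrank K U = d := by
  induction d, h1 using Nat.le_induction with
  | base => exact ⟨A, le_rfl, hAB, rfl⟩
  | succ d hd ih =>
    obtain ⟨U, hAU, hUB, hU⟩ := ih (le_of_lt h2)
    have : ∃ b ∈ B, b ∉ U := by
      by_contra h
      push_neg at h
      have : finrank K B ≤ finrank K U := Submodule.finrank_mono (fun x hx => h x hx)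
      omega
    obtain ⟨b, hbB, hbU⟩ := this
    refine ⟨U ⊔ K ∙ b, hAU.trans le_sup_left, sup_le hUB ((span_singleton_le_iff_mem b B).mpr hbB), ?_⟩
    rw [rank_sup_span_singleton hbU, hU]

lemma aux_index (hmono : ∀ i, C (i + 1) ≤ C i) (ht : C t = ⊥)
    (hS : ∀ f ∈ S, ∀ n, Submodule.map f (C n) ≤ C (n + 1))
    (U : Submodule K V) (i : ℕ) (hpos : 0 < finrank K U) (hCU : C i ≤ U)
    (hmap : ∀ f ∈ S, Submodule.map f U ≤ C i) :
    ∃ i', C i' ≤ U ∧ (∀ f ∈ S, Submodule.map f U ≤ C i') ∧ finrank K (C i') < finrank K U := by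
  have hanti : Antitone C := antitone_nat_of_succ_le hmono
  have hex : ∃ j, finrank K (C (i + j)) < finrank K U := by
    refine ⟨t, ?_⟩
    have h : C (i + t) ≤ C t := hanti (Nat.le_add_left t i)
    rw [ht, le_bot_iff] at h
    rw [h]
    simpa using hpos
  classical
  have hj₀spec : finrank K (C (i + Nat.find hex)) < finrank K U := Nat.find_spec hex
  have heq : ∀ j < Nat.find hex, C (i + j) = U := by
    intro j hj
    have h1 : ¬ finrank K (C (i + j)) < finrank K U := Nat.find_min hex hj
    have h2 : C (i + j) ≤ U := (hanti (Nat.le_add_right i j)).trans hCU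
    exact Submodule.eq_of_le_of_finrank_le h2 (le_of_not_gt h1)
  rcases Nat.eq_zero_or_pos (Nat.find hex) with h0 | h0
  · refine ⟨i, hCU, hmap, ?_⟩
    rw [h0, Nat.add_zero] at hj₀spec
    exact hj₀spec
  · obtain ⟨j, hj⟩ : ∃ j, Nat.find hex = j + 1 := ⟨Nat.find hex - 1, by omega⟩
    have hU : C (i + j) = U := heq j (by omega)
    refine ⟨i + (j + 1), ?_, ?_, ?_⟩
    · exact (hmono (i + j)).trans hU.le
    · intro f hf
      rw [← hU]
      exact (hS f hf (i + j)).trans_eq (by ring_nf)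
    · rw [hj] at hj₀spec; exact (by rw [show i + (j+1) = i + j + 1 by ring] at hj₀spec ⊢; exact hj₀spec)

lemma exists_flag (hmono : ∀ i, C (i + 1) ≤ C i) (ht : C t = ⊥)
    (hS : ∀ f ∈ S, ∀ n, Submodule.map f (C n) ≤ C (n + 1)) :
    ∀ (d : ℕ) (W : Submodule K V) (i : ℕ), finrank K W = d → C i ≤ W →
      (∀ f ∈ S, Submodule.map f W ≤ C i) → (d = 0 ∨ finrank K (C i) < d) →
      ∃ Fl : ℕ → Submodule K V,
        (∀ e, finrank K (Fl e) = min e d) ∧ Monotone Fl ∧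
        (∀ e, d ≤ e → Fl e = W) ∧
        (∀ f ∈ S, ∀ e, Submodule.map f (Fl (e + 1)) ≤ Fl e) := by
  intro d
  induction d with
  | zero =>
    intro W i hW _ _ _
    have hWbot : W = ⊥ := by
      rw [← Submodule.finrank_eq_zero (R := K) (M := V)]  -- maybe wrong name usage
      exact hW
    refine ⟨fun _ => ⊥, by simp, monotone_const, fun e _ => hWbot.symm, ?_⟩
    intro f hf e
    simp
  | succ d ih =>
    intro W i hW hCW hmapW hd
    have hCi : finrank K (C i) ≤ d := by omega
    obtain ⟨U, hCU, hUW, hU⟩ := exists_between_finrank hCW hCi (by omega)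
    -- invariant for U
    have hmapU : ∀ f ∈ S, Submodule.map f U ≤ C i := fun f hf =>
      (Submodule.map_mono hUW).trans (hmapW f hf)
    have hstep : ∃ i', C i' ≤ U ∧ (∀ f ∈ S, Submodule.map f U ≤ C i') ∧
        (d = 0 ∨ finrank K (C i') < d) := by
      rcases Nat.eq_zero_or_pos d with rfl | hdpos
      · exact ⟨i, hCU, hmapU, Or.inl rfl⟩
      · obtain ⟨i', h1, h2, h3⟩ := aux_index hmono ht hS U i (by omega) hCU hmapU
        exact ⟨i', h1, h2, Or.inr (by omega)⟩
    obtain ⟨i', hCU', hmapU', hd'⟩ := hstep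
    obtain ⟨Fl, hFlrank, hFlmono, hFltop, hFlmap⟩ := ih U i' hU hCU' hmapU' hd'
    refine ⟨fun e => if d + 1 ≤ e then W else Fl e, ?_, ?_, ?_, ?_⟩
    · intro e
      beta_reduce
      by_cases he : d + 1 ≤ e
      · rw [if_pos he, hW]; omega
      · rw [if_neg he, hFlrank e]; omega
    · apply monotone_nat_of_le_succ
      intro e
      beta_reduce
      by_cases he : d + 1 ≤ e
      · simp [he, show d + 1 ≤ e + 1 by omega]
      · by_cases he' : d + 1 ≤ e + 1
        · rw [if_neg he, if_pos he', hFltop e (by omega)]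
          exact hUW
        · simp only [if_neg he, if_neg he']
          exact hFlmono (Nat.le_succ e)
    · intro e he; beta_reduce; rw [if_pos he]
    · intro f hf e
      beta_reduce
      by_cases he : d + 1 ≤ e + 1
      · by_cases he' : d + 1 ≤ e
        · simp only [if_pos he, if_pos he']
          exact (hmapW f hf).trans (hCU.trans hUW)
        · rw [if_pos he, if_neg he', hFltop e (by omega)]
          exact (hmapW f hf).trans hCU
      · have he' : ¬ d + 1 ≤ e := by omega
        simp only [if_neg he, if_neg he']
        exact hFlmap f hf e

lemma exists_basis_flag {n : ℕ} (hn : finrank K V = n) (Fl : ℕ → Submodule K V)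
    (hrank : ∀ e, finrank K (Fl e) = min e n) (hmonoF : Monotone Fl) :
    ∃ b : Basis (Fin n) K V,
      (∀ j : Fin n, b j ∈ Fl (↑j + 1)) ∧
      (∀ j : ℕ, j ≤ n → Fl j = span K (⇑b '' {l : Fin n | ↑l < j})) := by
  have hstep : ∀ j : Fin n, ∃ v, v ∈ Fl (↑j + 1) ∧ Fl (↑j + 1) = Fl ↑j ⊔ K ∙ v := by
    intro j
    have hj : finrank K (Fl ↑j) = ↑j := by rw [hrank]; omega
    have hj1 : finrank K (Fl (↑j + 1)) = ↑j + 1 := by rw [hrank]; omega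
    have : ∃ v ∈ Fl (↑j + 1), v ∉ Fl ↑j := by
      by_contra h
      push_neg at h
      have := Submodule.finrank_mono (fun x hx => h x hx : Fl (↑j+1) ≤ Fl ↑j)
      omega
    obtain ⟨v, hv1, hv2⟩ := this
    refine ⟨v, hv1, ?_⟩
    have hle : Fl ↑j ⊔ (K ∙ v) ≤ Fl (↑j + 1) :=
      sup_le (hmonoF (Nat.le_succ _)) ((span_singleton_le_iff_mem v _).mpr hv1)
    refine (Submodule.eq_of_le_of_finrank_le hle ?_).symm
    rw [hj1, rank_sup_span_singleton hv2, hj]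
  choose w hw1 hw2 using hstep
  have hspan : ∀ j : ℕ, j ≤ n → Fl j = span K (w '' {l : Fin n | ↑l < j}) := by
    intro j
    induction j with
    | zero =>
      intro _
      have : Fl 0 = ⊥ := by
        rw [← Submodule.finrank_eq_zero (R := K)]
        rw [hrank]; omega
      rw [this]
      have h : {l : Fin n | (l : ℕ) < 0} = (∅ : Set (Fin n)) := by
        ext l; simp only [Set.mem_setOf_eq, Set.mem_empty_iff_false, iff_false]; omega
      rw [h]
      simp
    | succ j ihj =>
      intro hjn
      have hjn' : j < n := by omega
      have hset : {l : Fin n | ↑l < j + 1} = insert ⟨j, hjn'⟩ {l : Fin n | ↑l < j} := by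
        ext l
        simp only [Set.mem_setOf_eq, Set.mem_insert_iff, Fin.ext_iff]
        omega
      rw [hset, Set.image_insert_eq, Submodule.span_insert, ← ihj (by omega)]
      have := hw2 ⟨j, hjn'⟩
      simp only [Fin.val_mk] at this
      rw [this, sup_comm]
  have htop : ⊤ ≤ span K (Set.range w) := by
    have h1 : Fl n = ⊤ := Submodule.eq_top_of_finrank_eq (by rw [hrank]; omega)
    have h2 : {l : Fin n | ↑l < n} = Set.univ := by ext l; simp [l.isLt]
    have := hspan n le_rfl
    rw [h1, h2, Set.image_univ] at this
    exact this.le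
  let b := basisOfTopLeSpanOfCardEqFinrank w htop (by simp [hn])
  have hb : ⇑b = w := coe_basisOfTopLeSpanOfCardEqFinrank w htop (by simp [hn])
  refine ⟨b, ?_, ?_⟩
  · intro j; rw [hb]; exact hw1 j
  · intro j hjn; rw [hb]; exact hspan j hjn

end auxlemmas

attribute [local instance 100] LieRing.ofAssociativeRing

section strictUpperFacts
variable {k : Type*} [Field k]

lemma mem_strictUpper {n : ℕ} {A : Matrix (Fin n) (Fin n) k} :
    A ∈ strictUpper k n ↔ ∀ i j : Fin n, j ≤ i → A i j = 0 := Iff.rfl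

noncomputable def strictUpperEquiv (n : ℕ) :
    (strictUpper k n) ≃ₗ[k] ({p : Fin n × Fin n // p.1 < p.2} → k) where
  toFun A p := (A : Matrix (Fin n) (Fin n) k) p.1.1 p.1.2
  map_add' A B := rfl
  map_smul' c A := rfl
  invFun f := ⟨Matrix.of fun i j => if h : i < j then f ⟨(i, j), h⟩ else 0, by
    intro i j hij
    exact dif_neg (not_lt.mpr hij)⟩
  left_inv A := by
    apply Subtype.ext
    ext i j
    show (if h : i < j then (A : Matrix (Fin n) (Fin n) k) i j else 0)
        = (A : Matrix (Fin n) (Fin n) k) i j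
    by_cases h : i < j
    · rw [dif_pos h]
    · rw [dif_neg h]
      exact ((mem_strictUpper.mp A.2) i j (not_lt.mp h)).symm
  right_inv f := by
    funext p
    show (if h : p.1.1 < p.1.2 then f ⟨(p.1.1, p.1.2), h⟩ else 0) = f p
    rw [dif_pos p.2]

instance : FiniteDimensional k (strictUpper k 4) :=
  LinearEquiv.finiteDimensional (strictUpperEquiv (k := k) 4).symm

lemma finrank_strictUpper_four : finrank k (strictUpper k 4) = 6 := by
  rw [(strictUpperEquiv (k := k) 4).finrank_eq, Module.finrank_pi]
  decide
end strictUpperFacts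

/-- A `6`-dimensional nilpotent Lie algebra admitting a faithful nilrepresentation on `k⁴`
is isomorphic to `n_4(k)`, the strictly upper triangular `4 × 4` matrices. -/
theorem iso_strictUpper_four_of_faithful_nilrep_dim_four
    (k g : Type*) [Field k] [CharZero k]
    [LieRing g] [LieAlgebra k g] [FiniteDimensional k g] [LieRing.IsNilpotent g]
    (hdim : Module.finrank k g = 6)
    (π : g →ₗ⁅k⁆ Matrix (Fin 4) (Fin 4) k) (hinj : Function.Injective π)
    (hnil : ∀ X : g, IsNilpotent (π X)) :
    Nonempty (g ≃ₗ⁅k⁆ strictUpper k 4) := by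
  classical
  let ρ : g →ₗ⁅k⁆ Module.End k (Fin 4 → k) :=
    ((lieEquivMatrix' (R := k) (n := Fin 4)).symm.toLieHom).comp π
  letI : LieRingModule g (Fin 4 → k) := LieRingModule.compLieHom _ ρ
  letI : LieModule k g (Fin 4 → k) := LieModule.compLieHom _ ρ
  have hnilE : ∀ X : g, IsNilpotent (LieModule.toEnd k g (Fin 4 → k) X) := by
    intro X
    have h1 : LieModule.toEnd k g (Fin 4 → k) X = ρ X := rfl
    have h2 : ρ X = Matrix.toLinAlgEquiv' (π X) := rfl
    rw [h1, h2]
    exact (hnil X).map (Matrix.toLinAlgEquiv' (R := k) (n := Fin 4))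
  haveI hN : LieModule.IsNilpotent g (Fin 4 → k) :=
    LieAlgebra.isEngelian_of_isNoetherian (Fin 4 → k) hnilE
  obtain ⟨t, ht⟩ := LieModule.IsNilpotent.nilpotent
    (R := k) (L := g) (M := Fin 4 → k)
  set C : ℕ → Submodule k (Fin 4 → k) :=
    fun i => (LieModule.lowerCentralSeries k g (Fin 4 → k) i : Submodule k (Fin 4 → k)) with hCdef
  have hmonoC : ∀ i, C (i + 1) ≤ C i := by
    intro i x hx
    exact LieModule.antitone_lowerCentralSeries k g (Fin 4 → k) (Nat.le_succ i) hx
  have htC : C t = ⊥ := by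
    rw [hCdef]
    simp only [ht, LieSubmodule.bot_toSubmodule]
  have hC0 : C 0 = ⊤ := by
    rw [hCdef]
    simp only [LieModule.lowerCentralSeries_zero, LieSubmodule.top_toSubmodule]
  have hS : ∀ f ∈ Set.range (fun X : g => (ρ X : Module.End k (Fin 4 → k))),
      ∀ n, Submodule.map f (C n) ≤ C (n + 1) := by
    rintro f ⟨X, rfl⟩ n y hy
    obtain ⟨m, hm, rfl⟩ := hy
    have hm' : m ∈ LieModule.lowerCentralSeries k g (Fin 4 → k) n := hm
    show ρ X m ∈ LieModule.lowerCentralSeries k g (Fin 4 → k) (n + 1)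
    have hbr : ρ X m = ⁅X, m⁆ := rfl
    rw [hbr, LieModule.lowerCentralSeries_succ]
    exact LieSubmodule.lie_mem_lie (LieSubmodule.mem_top X) hm'
  have hfinV : finrank k (Fin 4 → k) = 4 := by simp
  obtain ⟨i₀, hi₀1, hi₀2, hi₀3⟩ := aux_index hmonoC htC hS ⊤ 0
    (by rw [finrank_top, hfinV]; omega) (le_top)
    (fun f hf => by rw [hC0]; exact le_top)
  rw [finrank_top, hfinV] at hi₀3
  obtain ⟨Fl, hFr, hFm, _, hFmap⟩ := exists_flag hmonoC htC hS 4 ⊤ i₀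
    (by rw [finrank_top, hfinV]) hi₀1 hi₀2 (Or.inr hi₀3)
  obtain ⟨b, hb1, hb2⟩ := exists_basis_flag hfinV Fl hFr hFm
  let Φ : g →ₗ⁅k⁆ Matrix (Fin 4) (Fin 4) k :=
    ((LinearMap.toMatrixAlgEquiv b).toLieEquiv.toLieHom).comp ρ
  have hΦmem : ∀ X : g, Φ X ∈ strictUpper k 4 := by
    intro X
    rw [mem_strictUpper]
    intro i j hij
    have hΦ : Φ X = LinearMap.toMatrixAlgEquiv b (ρ X) := rfl
    rw [hΦ, LinearMap.toMatrixAlgEquiv_apply]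
    have hmem : ρ X (b j) ∈ Fl ↑j :=
      hFmap (ρ X) ⟨X, rfl⟩ ↑j (Submodule.mem_map_of_mem (hb1 j))
    rw [hb2 ↑j (by omega)] at hmem
    rw [Basis.mem_span_image] at hmem
    by_contra hne
    have h1 : i ∈ ((b.repr (ρ X (b j))).support : Set (Fin 4)) :=
      Finsupp.mem_support_iff.mpr hne
    have h2 := hmem h1
    simp only [Set.mem_setOf_eq] at h2
    have : (j : ℕ) ≤ (i : ℕ) := hij
    omega
  let F : g →ₗ⁅k⁆ strictUpper k 4 :=
    { toLinearMap := Φ.toLinearMap.codRestrict (strictUpper k 4).toSubmodule hΦmem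
      map_lie' := by
        intro x y
        apply Subtype.ext
        rw [LieSubalgebra.coe_bracket]
        exact Φ.map_lie x y }
  have hΦinj : Function.Injective Φ := by
    intro x y hxy
    apply hinj
    have h1 : LinearMap.toMatrixAlgEquiv b (ρ x) = LinearMap.toMatrixAlgEquiv b (ρ y) := hxy
    have h2 : ρ x = ρ y := (LinearMap.toMatrixAlgEquiv b).injective h1
    have h3 : (lieEquivMatrix' (R := k) (n := Fin 4)).symm (π x)
        = (lieEquivMatrix' (R := k) (n := Fin 4)).symm (π y) := h2
    exact (lieEquivMatrix' (R := k) (n := Fin 4)).symm.injective h3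
  have hFinj : Function.Injective F := by
    intro x y hxy
    exact hΦinj (congrArg Subtype.val hxy)
  have hFsurj : Function.Surjective F := by
    have H : finrank k g = finrank k (strictUpper k 4) := by
      rw [hdim, finrank_strictUpper_four]
    exact (LinearMap.injective_iff_surjective_of_finrank_eq_finrank H
      (f := F.toLinearMap)).mp hFinj
  exact ⟨LieEquiv.ofBijective F ⟨hFinj, hFsurj⟩⟩
end
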